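/- Let h : ℝ → [0, ∞] be a measurable function. Then ∫_{(-π, π)} h(cot θ) / |cos(2θ)| dθ = 2 ∫_ℝ h(z) / |z² - 1| dz (as an equality in [0, ∞], with the integrand on the left interpreted via the substitution z = cot θ). -/

import Mathlib

open MeasureTheory Real Set

private theorem lintegral_image_eq_lintegral_abs_deriv_mul'
    {s : Set ℝ} {f f' : ℝ → ℝ} (hs : MeasurableSet s)
    (hf' : ∀ x ∈ s, HasDerivWithinAt f (f' x) s x) (hf : Set.InjOn f s) (g : ℝ → ENNReal) :
    ∫⁻ x in f '' s, g x = ∫⁻ x in s, ENNReal.ofReal |f' x| * g (f x) := by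
  simpa only [ContinuousLinearMap.det_toSpanSingleton] using
    lintegral_image_eq_lintegral_abs_det_fderiv_mul volume hs
      (fun x hx => (hf' x hx).hasFDerivWithinAt) hf g

private theorem key_cot (h : ℝ → ENNReal) :
    ∫⁻ θ in Set.Ioo 0 π,
        h (Real.cos θ / Real.sin θ) / ENNReal.ofReal |Real.cos (2 * θ)| =
      ∫⁻ z : ℝ, h z / ENNReal.ofReal |z ^ 2 - 1| := by
  set f : ℝ → ℝ := fun θ => Real.cos θ / Real.sin θ with hf_def
  have hfeq : ∀ θ : ℝ, f θ = Real.tan (π / 2 - θ) := by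
    intro θ
    rw [Real.tan_eq_sin_div_cos, Real.sin_pi_div_two_sub, Real.cos_pi_div_two_sub]
  have hsin : ∀ θ ∈ Set.Ioo (0 : ℝ) π, 0 < Real.sin θ := fun θ hθ =>
    Real.sin_pos_of_pos_of_lt_pi hθ.1 hθ.2
  have himg : f '' Set.Ioo 0 π = Set.univ := by
    have h1 : f = Real.tan ∘ (fun θ => π / 2 - θ) := funext fun θ => hfeq θ
    have h2 : (fun θ : ℝ => π / 2 - θ) '' Set.Ioo 0 π = Set.Ioo (-(π / 2)) (π / 2) := by
      rw [Set.image_const_sub_Ioo]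
      congr 1 <;> ring
    rw [h1, Set.image_comp, h2, Real.image_tan_Ioo]
  have hinj : Set.InjOn f (Set.Ioo 0 π) := by
    intro a ha b hb hab
    have h1 : π / 2 - a ∈ Set.Ioo (-(π / 2)) (π / 2) :=
      ⟨by linarith [ha.2], by linarith [ha.1]⟩
    have h2 : π / 2 - b ∈ Set.Ioo (-(π / 2)) (π / 2) :=
      ⟨by linarith [hb.2], by linarith [hb.1]⟩
    have := Real.injOn_tan h1 h2 (by rw [← hfeq, ← hfeq]; exact hab)
    linarith
  have hderiv : ∀ θ ∈ Set.Ioo (0 : ℝ) π,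
      HasDerivWithinAt f (-(1 / Real.sin θ ^ 2)) (Set.Ioo 0 π) θ := by
    intro θ hθ
    have hs := (hsin θ hθ).ne'
    have H := ((Real.hasDerivAt_cos θ).div (Real.hasDerivAt_sin θ) hs)
    have heq : (-Real.sin θ * Real.sin θ - Real.cos θ * Real.cos θ) / Real.sin θ ^ 2
        = -(1 / Real.sin θ ^ 2) := by
      have := Real.sin_sq_add_cos_sq θ
      field_simp
      nlinarith [this]
    rw [heq] at H
    exact H.hasDerivWithinAt
  rw [show (∫⁻ z : ℝ, h z / ENNReal.ofReal |z ^ 2 - 1|)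
      = ∫⁻ z in f '' Set.Ioo 0 π, h z / ENNReal.ofReal |z ^ 2 - 1| by
    rw [himg, Measure.restrict_univ]]
  rw [lintegral_image_eq_lintegral_abs_deriv_mul' measurableSet_Ioo hderiv hinj
    (fun z => h z / ENNReal.ofReal |z ^ 2 - 1|)]
  refine setLIntegral_congr_fun measurableSet_Ioo ?_
  intro θ hθ
  have hs0 : 0 < Real.sin θ := hsin θ hθ
  have hs2 : 0 < Real.sin θ ^ 2 := by positivity
  have habs : |(-(1 / Real.sin θ ^ 2))| = 1 / Real.sin θ ^ 2 := by
    rw [abs_neg, abs_of_pos (by positivity)]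
  have hcos2 : Real.cos (2 * θ) = Real.sin θ ^ 2 * (f θ ^ 2 - 1) := by
    rw [Real.cos_two_mul']
    simp only [hf_def, div_pow]
    rw [mul_sub, mul_one, mul_div_assoc', mul_div_cancel_left₀ _ hs2.ne']
  have habs2 : |Real.cos (2 * θ)| = Real.sin θ ^ 2 * |f θ ^ 2 - 1| := by
    rw [hcos2, abs_mul, abs_of_pos hs2]
  beta_reduce
  rw [habs, habs2, ENNReal.ofReal_mul hs2.le]
  set a : ENNReal := ENNReal.ofReal (Real.sin θ ^ 2) with ha_def
  set b : ENNReal := ENNReal.ofReal |f θ ^ 2 - 1|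
  have ha0 : a ≠ 0 := by
    simp [ha_def, ENNReal.ofReal_eq_zero, not_le, hs2, hs0.ne']
  have hatop : a ≠ ⊤ := ENNReal.ofReal_ne_top
  have hainv : ENNReal.ofReal (1 / Real.sin θ ^ 2) = a⁻¹ := by
    rw [one_div, ENNReal.ofReal_inv_of_pos hs2]
  rw [hainv]
  simp only [div_eq_mul_inv, ENNReal.mul_inv (Or.inl ha0) (Or.inl hatop)]
  rw [show f θ = Real.cos θ * (Real.sin θ)⁻¹ from rfl]
  ring

open MeasureTheory Real in
theorem stmt16 (h : ℝ → ENNReal) (hh : Measurable h) :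
    ∫⁻ θ in Set.Ioo (-π) π,
        h (Real.cos θ / Real.sin θ) / ENNReal.ofReal |Real.cos (2 * θ)| =
      2 * ∫⁻ z : ℝ, h z / ENNReal.ofReal |z ^ 2 - 1| := by
  set F : ℝ → ENNReal :=
    fun θ => h (Real.cos θ / Real.sin θ) / ENNReal.ofReal |Real.cos (2 * θ)| with hF_def
  have hFper : ∀ x : ℝ, F (x - π) = F x := by
    intro x
    simp only [hF_def]
    rw [Real.cos_sub_pi, Real.sin_sub_pi, neg_div_neg_eq,
      show 2 * (x - π) = x + x - 2 * π by ring,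
      Real.cos_sub_two_pi, show x + x = 2 * x by ring]
  have htrans : ∫⁻ θ in Set.Ioo (-π) 0, F θ = ∫⁻ θ in Set.Ioo 0 π, F θ := by
    have himg : (fun x : ℝ => x - π) '' Set.Ioo 0 π = Set.Ioo (-π) 0 := by
      rw [Set.image_sub_const_Ioo]
      norm_num
    have hderiv : ∀ x ∈ Set.Ioo (0 : ℝ) π,
        HasDerivWithinAt (fun x : ℝ => x - π) 1 (Set.Ioo 0 π) x := fun x _ =>
      ((hasDerivAt_id x).sub_const π).hasDerivWithinAt
    have hinj : Set.InjOn (fun x : ℝ => x - π) (Set.Ioo 0 π) := fun a _ b _ hab => by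
      simpa using hab
    rw [← himg, lintegral_image_eq_lintegral_abs_deriv_mul' measurableSet_Ioo hderiv hinj F]
    simp only [abs_one, ENNReal.ofReal_one, one_mul, hFper]
  have hdisj : Disjoint (Set.Ioc (-π) 0) (Set.Ioo (0 : ℝ) π) := by
    rw [Set.disjoint_left]
    rintro x ⟨_, hx2⟩ ⟨hx3, _⟩
    linarith
  have hsplit : ∫⁻ θ in Set.Ioo (-π) π, F θ
      = (∫⁻ θ in Set.Ioo (-π) 0, F θ) + ∫⁻ θ in Set.Ioo 0 π, F θ := by
    rw [← Set.Ioc_union_Ioo_eq_Ioo (by linarith [Real.pi_pos] : -π ≤ 0) Real.pi_pos,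
      lintegral_union measurableSet_Ioo hdisj]
    congr 1
    exact (setLIntegral_congr (Ioo_ae_eq_Ioc (a := -π) (b := (0 : ℝ)))).symm
  rw [hsplit, htrans, ← key_cot h, two_mul]
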